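/- (Spectral Chernoff bound, lower tail.) Under the same setup, for 0 ≤ δ ≤ 1, Pr[X ≤ (1−δ)μt] ≤ c‖φ‖_π exp(−δ²(1−λ)μt/36) for some absolute constant c. -/

import Mathlib

open Finset Matrix

/-- Row-stochastic matrix. -/
def IsStochastic {n : ℕ} (M : Matrix (Fin n) (Fin n) ℝ) : Prop :=
  (∀ i j, 0 ≤ M i j) ∧ ∀ i, ∑ j, M i j = 1

/-- Probability distribution on `Fin n`. -/
def IsDist {n : ℕ} (x : Fin n → ℝ) : Prop :=
  (∀ i, 0 ≤ x i) ∧ ∑ i, x i = 1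

/-- Total variation distance. -/
noncomputable def tvDist {n : ℕ} (u w : Fin n → ℝ) : ℝ :=
  (1 / 2) * ∑ i, |u i - w i|

/-- Inner product under the π-kernel. -/
noncomputable def piInner {n : ℕ} (π u v : Fin n → ℝ) : ℝ :=
  ∑ i, u i * v i / π i

/-- π-norm. -/
noncomputable def piNorm {n : ℕ} (π u : Fin n → ℝ) : ℝ :=
  Real.sqrt (∑ i, (u i) ^ 2 / π i)

/-- Component of `x` parallel to `π` (in the π-inner product). -/
noncomputable def parComp {n : ℕ} (π x : Fin n → ℝ) : Fin n → ℝ :=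
  fun i => piInner π x π * π i

/-- Component of `x` perpendicular to `π` (in the π-inner product). -/
noncomputable def perpComp {n : ℕ} (π x : Fin n → ℝ) : Fin n → ℝ :=
  fun i => x i - parComp π x i

/-- Spectral expansion of a Markov chain with stationary distribution π. -/
noncomputable def specExp {n : ℕ} (π : Fin n → ℝ) (M : Matrix (Fin n) (Fin n) ℝ) : ℝ :=
  sSup {r : ℝ | ∃ x : Fin n → ℝ, x ≠ 0 ∧ piInner π x π = 0 ∧
    r = piNorm π (x ᵥ* M) / piNorm π x}

/-- Probability that a Markov chain walk started from distribution `φ` with transition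
matrix `M` follows the trajectory `v` (a walk of `t + 1` steps). -/
noncomputable def walkProb {n t : ℕ} (φ : Fin n → ℝ) (M : Matrix (Fin n) (Fin n) ℝ)
    (v : Fin (t + 1) → Fin n) : ℝ :=
  φ (v 0) * ∏ i : Fin t, M (v i.castSucc) (v i.succ)

open scoped Classical

section Aux

variable {n : ℕ} {π : Fin n → ℝ} {M : Matrix (Fin n) (Fin n) ℝ}

lemma piNorm_nonneg (u : Fin n → ℝ) : 0 ≤ piNorm π u := Real.sqrt_nonneg _

lemma sum_sq_div_nonneg (hπ : ∀ i, 0 < π i) (u : Fin n → ℝ) :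
    0 ≤ ∑ i, u i ^ 2 / π i :=
  Finset.sum_nonneg fun i _ => div_nonneg (sq_nonneg _) (hπ i).le

lemma piNorm_sq (hπ : ∀ i, 0 < π i) (u : Fin n → ℝ) :
    piNorm π u ^ 2 = ∑ i, u i ^ 2 / π i :=
  Real.sq_sqrt (sum_sq_div_nonneg hπ u)

lemma piNorm_le_of_sq_le (hπ : ∀ i, 0 < π i) {u v : Fin n → ℝ}
    (h : ∀ j, u j ^ 2 ≤ v j ^ 2) : piNorm π u ≤ piNorm π v :=
  Real.sqrt_le_sqrt (Finset.sum_le_sum fun j _ =>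
    div_le_div_of_nonneg_right (h j) (hπ j).le)

lemma cs (hπ : ∀ i, 0 < π i) (z c : Fin n → ℝ) :
    |∑ j, z j * c j| ≤ piNorm π z * Real.sqrt (∑ j, π j * c j ^ 2) := by
  have hfg : ∀ j, z j * c j = (z j / Real.sqrt (π j)) * (Real.sqrt (π j) * c j) := by
    intro j
    have h1 : Real.sqrt (π j) ≠ 0 := Real.sqrt_ne_zero'.mpr (hπ j)
    field_simp
  have hf : ∀ j, (z j / Real.sqrt (π j)) ^ 2 = z j ^ 2 / π j := by
    intro j
    rw [div_pow, Real.sq_sqrt (hπ j).le]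
  have hg : ∀ j, (Real.sqrt (π j) * c j) ^ 2 = π j * c j ^ 2 := by
    intro j
    rw [mul_pow, Real.sq_sqrt (hπ j).le]
  calc |∑ j, z j * c j| = Real.sqrt ((∑ j, z j * c j) ^ 2) := (Real.sqrt_sq_eq_abs _).symm
    _ ≤ Real.sqrt ((∑ j, (z j / Real.sqrt (π j)) ^ 2) * ∑ j, (Real.sqrt (π j) * c j) ^ 2) := by
        apply Real.sqrt_le_sqrt
        simp_rw [hfg]
        exact Finset.sum_mul_sq_le_sq_mul_sq _ _ _
    _ = piNorm π z * Real.sqrt (∑ j, π j * c j ^ 2) := by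
        rw [Real.sqrt_mul (Finset.sum_nonneg fun j _ => sq_nonneg _)]
        simp_rw [hf, hg, piNorm]

lemma abs_piInner_le (hπ : ∀ i, 0 < π i) (u v : Fin n → ℝ) :
    |piInner π u v| ≤ piNorm π u * piNorm π v := by
  have h := cs hπ u (fun j => v j / π j)
  have h1 : ∀ j, u j * (v j / π j) = u j * v j / π j := fun j => (mul_div_assoc _ _ _).symm
  have h2 : ∀ j, π j * (v j / π j) ^ 2 = v j ^ 2 / π j := by
    intro j
    have := (hπ j).ne'
    field_simp
  simp_rw [h1, h2] at h
  exact h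

lemma piNorm_add_le (hπ : ∀ i, 0 < π i) (u v : Fin n → ℝ) :
    piNorm π (fun j => u j + v j) ≤ piNorm π u + piNorm π v := by
  have hexp : ∑ j, (u j + v j) ^ 2 / π j
      = (∑ j, u j ^ 2 / π j) + 2 * piInner π u v + ∑ j, v j ^ 2 / π j := by
    rw [piInner, Finset.mul_sum, ← Finset.sum_add_distrib, ← Finset.sum_add_distrib]
    apply Finset.sum_congr rfl
    intro j _
    have := (hπ j).ne'
    field_simp
    ring
  have hCS := (abs_piInner_le hπ u v)
  have h2 : piInner π u v ≤ piNorm π u * piNorm π v := (le_abs_self _).trans hCS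
  have : ∑ j, (u j + v j) ^ 2 / π j ≤ (piNorm π u + piNorm π v) ^ 2 := by
    rw [hexp, ← piNorm_sq hπ u, ← piNorm_sq hπ v]
    nlinarith
  calc piNorm π (fun j => u j + v j) ≤ Real.sqrt ((piNorm π u + piNorm π v) ^ 2) :=
        Real.sqrt_le_sqrt this
    _ = piNorm π u + piNorm π v := by
        rw [Real.sqrt_sq_eq_abs, abs_of_nonneg (add_nonneg (piNorm_nonneg u) (piNorm_nonneg v))]

lemma piNorm_mul_le (hπ : ∀ i, 0 < π i) (u E : Fin n → ℝ) (hE : ∀ j, |E j| ≤ 1) :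
    piNorm π (fun j => u j * E j) ≤ piNorm π u := by
  apply piNorm_le_of_sq_le hπ
  intro j
  have h1 : E j ^ 2 ≤ 1 := by
    have := hE j
    nlinarith [abs_nonneg (E j), sq_abs (E j)]
  calc (u j * E j) ^ 2 = u j ^ 2 * E j ^ 2 := by ring
    _ ≤ u j ^ 2 * 1 := by nlinarith [sq_nonneg (u j)]
    _ = u j ^ 2 := mul_one _

lemma piNorm_smul (a : ℝ) (u : Fin n → ℝ) :
    piNorm π (fun j => a * u j) = |a| * piNorm π u := by
  unfold piNorm
  rw [← Real.sqrt_sq_eq_abs, ← Real.sqrt_mul (sq_nonneg a), Finset.mul_sum]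
  congr 1
  apply Finset.sum_congr rfl
  intro j _
  rw [mul_pow, mul_div_assoc]

lemma perp_sq (hπ : ∀ i, 0 < π i) (hπd : IsDist π) (u : Fin n → ℝ) :
    ∑ j, (u j - (∑ i, u i) * π j) ^ 2 / π j
      = (∑ j, u j ^ 2 / π j) - (∑ i, u i) ^ 2 := by
  have hexp : ∀ j, (u j - (∑ i, u i) * π j) ^ 2 / π j
      = u j ^ 2 / π j - 2 * (∑ i, u i) * u j + (∑ i, u i) ^ 2 * π j := by
    intro j
    have := (hπ j).ne'
    field_simp
    ring
  simp_rw [hexp]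
  rw [Finset.sum_add_distrib, Finset.sum_sub_distrib, ← Finset.mul_sum, ← Finset.mul_sum,
    hπd.2]
  ring

lemma perp_le (hπ : ∀ i, 0 < π i) (hπd : IsDist π) (u : Fin n → ℝ) :
    piNorm π (fun j => u j - (∑ i, u i) * π j) ≤ piNorm π u := by
  unfold piNorm
  apply Real.sqrt_le_sqrt
  rw [perp_sq hπ hπd u]
  nlinarith [sq_nonneg (∑ i, u i)]

lemma tot_perp (hπd : IsDist π) (u : Fin n → ℝ) :
    ∑ j, (u j - (∑ i, u i) * π j) = 0 := by
  rw [Finset.sum_sub_distrib, ← Finset.mul_sum, hπd.2, mul_one, sub_self]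

lemma tot_vecMul (hM : IsStochastic M) (u : Fin n → ℝ) :
    ∑ j, (u ᵥ* M) j = ∑ i, u i := by
  simp only [Matrix.vecMul, dotProduct]
  rw [Finset.sum_comm]
  apply Finset.sum_congr rfl
  intro i _
  rw [← Finset.mul_sum, hM.2 i, mul_one]

lemma contraction (hM : IsStochastic M) (hπ : ∀ i, 0 < π i) (hπM : π ᵥ* M = π)
    (u : Fin n → ℝ) : piNorm π (u ᵥ* M) ≤ piNorm π u := by
  unfold piNorm
  apply Real.sqrt_le_sqrt
  have key : ∀ j, ((u ᵥ* M) j) ^ 2 / π j ≤ ∑ i, u i ^ 2 * M i j / π i := by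
    intro j
    rw [div_le_iff₀ (hπ j)]
    have hfg : ∀ i, u i * M i j
        = (u i * Real.sqrt (M i j) / Real.sqrt (π i)) * (Real.sqrt (π i) * Real.sqrt (M i j)) := by
      intro i
      have h1 : Real.sqrt (π i) ≠ 0 := Real.sqrt_ne_zero'.mpr (hπ i)
      have h2 : Real.sqrt (M i j) * Real.sqrt (M i j) = M i j :=
        Real.mul_self_sqrt (hM.1 i j)
      have h3 : u i * Real.sqrt (M i j) / Real.sqrt (π i) * (Real.sqrt (π i) * Real.sqrt (M i j))
          = u i * (Real.sqrt (M i j) * Real.sqrt (M i j)) * (Real.sqrt (π i) / Real.sqrt (π i)) := by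
        ring
      rw [h3, h2, div_self h1, mul_one]
    have hCS := Finset.sum_mul_sq_le_sq_mul_sq Finset.univ
      (fun i => u i * Real.sqrt (M i j) / Real.sqrt (π i))
      (fun i => Real.sqrt (π i) * Real.sqrt (M i j))
    have hf : ∀ i, (u i * Real.sqrt (M i j) / Real.sqrt (π i)) ^ 2 = u i ^ 2 * M i j / π i := by
      intro i
      rw [div_pow, mul_pow, Real.sq_sqrt (hM.1 i j), Real.sq_sqrt (hπ i).le]
    have hg : ∀ i, (Real.sqrt (π i) * Real.sqrt (M i j)) ^ 2 = π i * M i j := by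
      intro i
      rw [mul_pow, Real.sq_sqrt (hπ i).le, Real.sq_sqrt (hM.1 i j)]
    have hπMj : ∑ i, π i * M i j = π j := by
      have := congrFun hπM j
      simpa [Matrix.vecMul, dotProduct] using this
    have huMj : (u ᵥ* M) j = ∑ i, u i * M i j := by
      simp [Matrix.vecMul, dotProduct]
    rw [huMj]
    calc (∑ i, u i * M i j) ^ 2
        = (∑ i, (u i * Real.sqrt (M i j) / Real.sqrt (π i)) * (Real.sqrt (π i) * Real.sqrt (M i j))) ^ 2 := by
          simp_rw [← hfg]
      _ ≤ (∑ i, (u i * Real.sqrt (M i j) / Real.sqrt (π i)) ^ 2)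
            * ∑ i, (Real.sqrt (π i) * Real.sqrt (M i j)) ^ 2 := hCS
      _ = (∑ i, u i ^ 2 * M i j / π i) * π j := by simp_rw [hf, hg, hπMj]
  calc ∑ j, ((u ᵥ* M) j) ^ 2 / π j ≤ ∑ j, ∑ i, u i ^ 2 * M i j / π i :=
        Finset.sum_le_sum fun j _ => key j
    _ = ∑ i, u i ^ 2 / π i := by
        rw [Finset.sum_comm]
        apply Finset.sum_congr rfl
        intro i _
        rw [← Finset.sum_div, ← Finset.mul_sum, hM.2 i, mul_one]

end Aux

section Spec

variable {n : ℕ} {π : Fin n → ℝ} {M : Matrix (Fin n) (Fin n) ℝ}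

lemma piNorm_pos (hπ : ∀ i, 0 < π i) {x : Fin n → ℝ} (hx : x ≠ 0) :
    0 < piNorm π x := by
  apply Real.sqrt_pos.mpr
  obtain ⟨i, hi⟩ := Function.ne_iff.mp hx
  apply Finset.sum_pos' (fun j _ => div_nonneg (sq_nonneg _) (hπ j).le)
  have hx2 : 0 < x i ^ 2 := by
    have := sq_abs (x i)
    nlinarith [abs_pos.mpr hi]
  exact ⟨i, Finset.mem_univ i, div_pos hx2 (hπ i)⟩

lemma piInner_pi_eq_tot (hπ : ∀ i, 0 < π i) (u : Fin n → ℝ) :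
    piInner π u π = ∑ i, u i := by
  unfold piInner
  apply Finset.sum_congr rfl
  intro i _
  rw [mul_div_assoc, div_self (hπ i).ne', mul_one]

lemma spec_set_bddAbove (hM : IsStochastic M) (hπ : ∀ i, 0 < π i) (hπM : π ᵥ* M = π) :
    ∀ ρ ∈ {r : ℝ | ∃ x : Fin n → ℝ, x ≠ 0 ∧ piInner π x π = 0 ∧
      r = piNorm π (x ᵥ* M) / piNorm π x}, ρ ≤ 1 := by
  rintro ρ ⟨x, hx, -, rfl⟩
  rw [div_le_one (piNorm_pos hπ hx)]
  exact contraction hM hπ hπM x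

lemma spec_nonneg (hM : IsStochastic M) (hπ : ∀ i, 0 < π i) (hπM : π ᵥ* M = π) :
    0 ≤ specExp π M := by
  unfold specExp
  set S := {r : ℝ | ∃ x : Fin n → ℝ, x ≠ 0 ∧ piInner π x π = 0 ∧
      r = piNorm π (x ᵥ* M) / piNorm π x} with hS
  rcases Set.eq_empty_or_nonempty S with h | h
  · rw [h, Real.sSup_empty]
  · obtain ⟨ρ, hρ⟩ := h
    have hρ0 : 0 ≤ ρ := by
      obtain ⟨x, hx, -, rfl⟩ := hρ
      exact div_nonneg (piNorm_nonneg _) (piNorm_nonneg _)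
    exact hρ0.trans (le_csSup ⟨1, spec_set_bddAbove hM hπ hπM⟩ hρ)

lemma spec_apply (hM : IsStochastic M) (hπ : ∀ i, 0 < π i) (hπM : π ᵥ* M = π)
    {w : Fin n → ℝ} (hw : ∑ j, w j = 0) :
    piNorm π (w ᵥ* M) ≤ specExp π M * piNorm π w := by
  by_cases h0 : w = 0
  · subst h0
    have h1 : (0 : Fin n → ℝ) ᵥ* M = 0 := Matrix.zero_vecMul M
    have h2 : piNorm π (0 : Fin n → ℝ) = 0 := by
      unfold piNorm; simp
    rw [h1, h2, mul_zero]
  · have hmem : piNorm π (w ᵥ* M) / piNorm π w ∈ {r : ℝ | ∃ x : Fin n → ℝ, x ≠ 0 ∧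
        piInner π x π = 0 ∧ r = piNorm π (x ᵥ* M) / piNorm π x} := by
      exact ⟨w, h0, by rw [piInner_pi_eq_tot hπ w]; exact hw, rfl⟩
    have hle : piNorm π (w ᵥ* M) / piNorm π w ≤ specExp π M :=
      le_csSup ⟨1, spec_set_bddAbove hM hπ hπM⟩ hmem
    calc piNorm π (w ᵥ* M) = (piNorm π (w ᵥ* M) / piNorm π w) * piNorm π w := by
          field_simp [(piNorm_pos hπ h0).ne']
      _ ≤ specExp π M * piNorm π w :=
          mul_le_mul_of_nonneg_right hle (piNorm_nonneg _)

end Spec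

section Chain

variable {n : ℕ}

/-- The evolving vector in the matrix-product proof of the expander Chernoff bound. -/
noncomputable def chainVec (M : Matrix (Fin n) (Fin n) ℝ) (φ : Fin n → ℝ)
    (E : ℕ → Fin n → ℝ) : ℕ → Fin n → ℝ
  | 0 => fun j => φ j * E 0 j
  | (k+1) => fun j => (chainVec M φ E k ᵥ* M) j * E (k+1) j

lemma chain_identity (M : Matrix (Fin n) (Fin n) ℝ) (φ : Fin n → ℝ)
    (E : ℕ → Fin n → ℝ) :
    ∀ (t : ℕ) (g : Fin n → ℝ),
      ∑ v : Fin (t + 1) → Fin n,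
        (φ (v 0) * ∏ i : Fin t, M (v i.castSucc) (v i.succ))
          * ((∏ i : Fin (t + 1), E (i : ℕ) (v i)) * g (v (Fin.last t)))
      = ∑ j, chainVec M φ E t j * g j := by
  intro t
  induction t with
  | zero =>
    intro g
    rw [← (Equiv.funUnique (Fin 1) (Fin n)).symm.sum_comp]
    simp [chainVec, Equiv.funUnique, mul_assoc]
  | succ t ih =>
    intro g
    have e := (Fin.snocEquiv (fun _ : Fin (t + 2) => Fin n)).sum_comp
      (fun v : Fin (t + 2) → Fin n =>
        (φ (v 0) * ∏ i : Fin (t + 1), M (v i.castSucc) (v i.succ))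
          * ((∏ i : Fin (t + 2), E (i : ℕ) (v i)) * g (v (Fin.last (t + 1)))))
    rw [← e, Fintype.sum_prod_type, Finset.sum_comm]
    have hEq : ∀ (j : Fin n) (w : Fin (t + 1) → Fin n),
        (Fin.snocEquiv (fun _ : Fin (t + 2) => Fin n) (j, w)) = Fin.snoc w j :=
      fun _ _ => rfl
    set G : Fin n → ℝ := fun j' => ∑ j, M j' j * (E (t + 1) j * g j) with hG
    have key : ∀ (w : Fin (t + 1) → Fin n) (j : Fin n),
        (φ ((Fin.snoc w j : Fin (t + 2) → Fin n) 0)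
            * ∏ i : Fin (t + 1), M ((Fin.snoc w j : Fin (t + 2) → Fin n) i.castSucc)
                ((Fin.snoc w j : Fin (t + 2) → Fin n) i.succ))
          * ((∏ i : Fin (t + 2), E (i : ℕ) ((Fin.snoc w j : Fin (t + 2) → Fin n) i))
              * g ((Fin.snoc w j : Fin (t + 2) → Fin n) (Fin.last (t + 1))))
        = (φ (w 0) * ∏ i : Fin t, M (w i.castSucc) (w i.succ))
            * ((∏ i : Fin (t + 1), E (i : ℕ) (w i))
                * (M (w (Fin.last t)) j * (E (t + 1) j * g j))) := by
      intro w j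
      have hA : (Fin.snoc w j : Fin (t + 2) → Fin n) 0 = w 0 := by
        have h0 : (0 : Fin (t + 2)) = Fin.castSucc (0 : Fin (t + 1)) := rfl
        rw [h0, Fin.snoc_castSucc]
      have hB : (∏ i : Fin (t + 1), M ((Fin.snoc w j : Fin (t + 2) → Fin n) i.castSucc)
              ((Fin.snoc w j : Fin (t + 2) → Fin n) i.succ))
          = (∏ i : Fin t, M (w i.castSucc) (w i.succ)) * M (w (Fin.last t)) j := by
        rw [Fin.prod_univ_castSucc]
        congr 1
        · apply Finset.prod_congr rfl
          intro i _
          rw [Fin.succ_castSucc, Fin.snoc_castSucc, Fin.snoc_castSucc]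
        · rw [Fin.succ_last, Fin.snoc_last, Fin.snoc_castSucc]
      have hC : (∏ i : Fin (t + 2), E (i : ℕ) ((Fin.snoc w j : Fin (t + 2) → Fin n) i))
          = (∏ i : Fin (t + 1), E (i : ℕ) (w i)) * E (t + 1) j := by
        rw [Fin.prod_univ_castSucc]
        congr 1
        · apply Finset.prod_congr rfl
          intro i _
          rw [Fin.snoc_castSucc, Fin.coe_castSucc]
        · rw [Fin.snoc_last, Fin.val_last]
      rw [hA, hB, hC, Fin.snoc_last]
      ring
    have step1 : ∀ w : Fin (t + 1) → Fin n,
        (∑ j, (φ ((Fin.snocEquiv (fun _ : Fin (t + 2) => Fin n) (j, w)) 0)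
            * ∏ i : Fin (t + 1), M ((Fin.snocEquiv (fun _ : Fin (t + 2) => Fin n) (j, w)) i.castSucc)
                ((Fin.snocEquiv (fun _ : Fin (t + 2) => Fin n) (j, w)) i.succ))
          * ((∏ i : Fin (t + 2), E (i : ℕ) ((Fin.snocEquiv (fun _ : Fin (t + 2) => Fin n) (j, w)) i))
              * g ((Fin.snocEquiv (fun _ : Fin (t + 2) => Fin n) (j, w)) (Fin.last (t + 1)))))
        = (φ (w 0) * ∏ i : Fin t, M (w i.castSucc) (w i.succ))
            * ((∏ i : Fin (t + 1), E (i : ℕ) (w i)) * G (w (Fin.last t))) := by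
      intro w
      simp_rw [hEq, key, hG]
      rw [← Finset.mul_sum, ← Finset.mul_sum]
    calc ∑ w : Fin (t + 1) → Fin n, ∑ j,
          (fun v : Fin (t + 2) → Fin n =>
            (φ (v 0) * ∏ i : Fin (t + 1), M (v i.castSucc) (v i.succ))
              * ((∏ i : Fin (t + 2), E (i : ℕ) (v i)) * g (v (Fin.last (t + 1)))))
            (Fin.snocEquiv (fun _ : Fin (t + 2) => Fin n) (j, w))
        = ∑ w : Fin (t + 1) → Fin n,
            (φ (w 0) * ∏ i : Fin t, M (w i.castSucc) (w i.succ))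
              * ((∏ i : Fin (t + 1), E (i : ℕ) (w i)) * G (w (Fin.last t))) := by
          apply Finset.sum_congr rfl
          intro w _
          exact step1 w
      _ = ∑ j', chainVec M φ E t j' * G j' := ih G
      _ = ∑ j, chainVec M φ E (t + 1) j * g j := by
          simp only [chainVec, hG]
          simp_rw [Matrix.vecMul, dotProduct, Finset.mul_sum, Finset.sum_mul]
          rw [Finset.sum_comm]
          apply Finset.sum_congr rfl
          intro j _
          apply Finset.sum_congr rfl
          intro j' _
          ring

end Chain

section StepRec

variable {n : ℕ} {π : Fin n → ℝ} {M : Matrix (Fin n) (Fin n) ℝ}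

lemma sq_le_of_sq_le {a b : ℝ} (ha : 0 ≤ a) (hb : 0 ≤ b) (h : a ^ 2 ≤ b ^ 2) : a ≤ b := by
  nlinarith [sq_nonneg (a - b), sq_nonneg (a + b)]

lemma step_bound (hM : IsStochastic M) (hπd : IsDist π) (hπ : ∀ i, 0 < π i)
    (hπM : π ᵥ* M = π)
    (u E : Fin n → ℝ) (hE0 : ∀ j, 0 ≤ E j) (hE1 : ∀ j, E j ≤ 1)
    {ν mbar : ℝ} (hν0 : 0 ≤ ν)
    (hvar : ∑ j, π j * (1 - E j) ^ 2 ≤ ν ^ 2)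
    (hm : ∑ j, π j * E j ≤ mbar) :
    |∑ j, (u ᵥ* M) j * E j|
        ≤ mbar * |∑ i, u i|
          + specExp π M * ν * piNorm π (fun j => u j - (∑ i, u i) * π j)
    ∧ piNorm π (fun j => (u ᵥ* M) j * E j - (∑ j', (u ᵥ* M) j' * E j') * π j)
        ≤ ν * |∑ i, u i|
          + specExp π M * piNorm π (fun j => u j - (∑ i, u i) * π j) := by
  set a : ℝ := ∑ i, u i with ha
  set w : Fin n → ℝ := fun j => u j - a * π j with hw
  set z : Fin n → ℝ := w ᵥ* M with hzdef
  set lam : ℝ := specExp π M with hlam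
  have hπMj : ∀ j, ∑ i, π i * M i j = π j := by
    intro j
    have := congrFun hπM j
    simpa [Matrix.vecMul, dotProduct] using this
  have hz : ∀ j, (u ᵥ* M) j = a * π j + z j := by
    intro j
    have h1 : z j = (∑ i, u i * M i j) - a * (∑ i, π i * M i j) := by
      simp only [hzdef, hw, Matrix.vecMul, dotProduct]
      simp_rw [sub_mul, mul_assoc]
      rw [Finset.sum_sub_distrib, ← Finset.mul_sum]
    have h2 : (u ᵥ* M) j = ∑ i, u i * M i j := by
      simp [Matrix.vecMul, dotProduct]
    rw [h2, h1, hπMj j]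
    ring
  have htotw : ∑ j, w j = 0 := tot_perp hπd u
  have htotz : ∑ j, z j = 0 := by rw [hzdef, tot_vecMul hM w, htotw]
  have hpnz : piNorm π z ≤ lam * piNorm π w := spec_apply hM hπ hπM htotw
  set m : ℝ := ∑ j, π j * E j with hmdef
  set s : ℝ := ∑ j, z j * E j with hsdef
  have hm0 : 0 ≤ m := Finset.sum_nonneg fun j _ => mul_nonneg (hπ j).le (hE0 j)
  have hEabs : ∀ j, |E j| ≤ 1 := fun j => abs_le.mpr ⟨by linarith [hE0 j], hE1 j⟩
  have hsqvar : Real.sqrt (∑ j, π j * (1 - E j) ^ 2) ≤ ν := by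
    calc Real.sqrt (∑ j, π j * (1 - E j) ^ 2) ≤ Real.sqrt (ν ^ 2) := Real.sqrt_le_sqrt hvar
      _ = ν := by rw [Real.sqrt_sq hν0]
  -- total of new vector
  have htot' : ∑ j, (u ᵥ* M) j * E j = a * m + s := by
    have h1 : ∀ j, (u ᵥ* M) j * E j = a * (π j * E j) + z j * E j := by
      intro j; rw [hz j]; ring
    simp_rw [h1]
    rw [Finset.sum_add_distrib, ← Finset.mul_sum]
  have hs_bound : |s| ≤ lam * ν * piNorm π w := by
    have h1 : s = ∑ j, z j * (E j - 1) := by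
      have : ∀ j, z j * (E j - 1) = z j * E j - z j := fun j => by ring
      simp_rw [this]
      rw [Finset.sum_sub_distrib, htotz, sub_zero, hsdef]
    have h2 := cs hπ z (fun j => E j - 1)
    have h3 : ∀ j, π j * (E j - 1) ^ 2 = π j * (1 - E j) ^ 2 := by
      intro j; ring_nf
    rw [h1]
    calc |∑ j, z j * (E j - 1)|
        ≤ piNorm π z * Real.sqrt (∑ j, π j * (E j - 1) ^ 2) := h2
      _ ≤ (lam * piNorm π w) * ν := by
          apply mul_le_mul hpnz _ (Real.sqrt_nonneg _) _
          · simp_rw [h3]; exact hsqvar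
          · exact mul_nonneg (spec_nonneg hM hπ hπM) (piNorm_nonneg _)
      _ = lam * ν * piNorm π w := by ring
  constructor
  · rw [htot']
    calc |a * m + s| ≤ |a * m| + |s| := abs_add_le _ _
      _ ≤ mbar * |a| + lam * ν * piNorm π w := by
          apply add_le_add _ hs_bound
          rw [abs_mul, abs_of_nonneg hm0, mul_comm]
          exact mul_le_mul_of_nonneg_right hm (abs_nonneg a)
  · -- perp bound
    set q : Fin n → ℝ := fun j => π j * E j - m * π j with hq
    set y : Fin n → ℝ := fun j => z j * E j - s * π j with hy
    have hdecomp : (fun j => (u ᵥ* M) j * E j - (∑ j', (u ᵥ* M) j' * E j') * π j)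
        = fun j => a * q j + y j := by
      funext j
      rw [htot', hz j, hq, hy]
      ring
    have hpq : piNorm π q ≤ ν := by
      apply sq_le_of_sq_le (piNorm_nonneg _) hν0
      have e1 : piNorm π q ^ 2 = (∑ j, (π j * E j) ^ 2 / π j) - m ^ 2 := by
        rw [hq, piNorm_sq hπ, hmdef]
        exact perp_sq hπ hπd (fun j => π j * E j)
      have e2 : ∀ j, (π j * E j) ^ 2 / π j = π j * E j ^ 2 := by
        intro j
        have := (hπ j).ne'
        field_simp
      have e3 : ∑ j, π j * (1 - E j) ^ 2 = 1 - 2 * m + ∑ j, π j * E j ^ 2 := by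
        have : ∀ j, π j * (1 - E j) ^ 2 = π j - 2 * (π j * E j) + π j * E j ^ 2 := by
          intro j; ring
        simp_rw [this]
        rw [Finset.sum_add_distrib, Finset.sum_sub_distrib, hπd.2, ← Finset.mul_sum, ← hmdef]
      rw [e1]
      simp_rw [e2]
      nlinarith [hvar, e3, sq_nonneg (1 - m)]
    have hpy : piNorm π y ≤ lam * piNorm π w := by
      have h1 : piNorm π y ≤ piNorm π (fun j => z j * E j) := by
        rw [hy, hsdef]
        exact perp_le hπ hπd (fun j => z j * E j)
      have h2 : piNorm π (fun j => z j * E j) ≤ piNorm π z := piNorm_mul_le hπ z E hEabs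
      exact h1.trans (h2.trans hpnz)
    rw [hdecomp]
    calc piNorm π (fun j => a * q j + y j)
        ≤ piNorm π (fun j => a * q j) + piNorm π y := piNorm_add_le hπ _ _
      _ = |a| * piNorm π q + piNorm π y := by rw [piNorm_smul]
      _ ≤ |a| * ν + lam * piNorm π w := by
          apply add_le_add _ hpy
          exact mul_le_mul_of_nonneg_left hpq (abs_nonneg a)
      _ = ν * |a| + lam * piNorm π w := by ring

lemma chain_bound (hM : IsStochastic M) (hπd : IsDist π) (hπ : ∀ i, 0 < π i)
    (hπM : π ᵥ* M = π) (φ : Fin n → ℝ) (hφ : IsDist φ)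
    (E : ℕ → Fin n → ℝ) (hE0 : ∀ k j, 0 ≤ E k j) (hE1 : ∀ k j, E k j ≤ 1)
    {ν mbar γ B : ℝ} (hν0 : 0 ≤ ν) (hγ0 : 0 ≤ γ) (hB0 : 0 ≤ B)
    (hvar : ∀ k, ∑ j, π j * (1 - E k j) ^ 2 ≤ ν ^ 2)
    (hm : ∀ k, ∑ j, π j * E k j ≤ mbar)
    (hA : mbar + γ * ν ≤ B)
    (hBc : specExp π M * (ν + γ) ≤ B * γ) :
    ∀ k, |∑ j, chainVec M φ E k j|
        + γ * piNorm π (fun j => chainVec M φ E k j - (∑ i, chainVec M φ E k i) * π j)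
      ≤ B ^ k * (1 + γ * piNorm π φ) := by
  intro k
  induction k with
  | zero =>
    simp only [chainVec, pow_zero, one_mul]
    have h1 : |∑ j, φ j * E 0 j| ≤ 1 := by
      rw [abs_of_nonneg (Finset.sum_nonneg fun j _ => mul_nonneg (hφ.1 j) (hE0 0 j))]
      calc ∑ j, φ j * E 0 j ≤ ∑ j, φ j := by
            apply Finset.sum_le_sum
            intro j _
            calc φ j * E 0 j ≤ φ j * 1 := by
                  exact mul_le_mul_of_nonneg_left (hE1 0 j) (hφ.1 j)
              _ = φ j := mul_one _
        _ = 1 := hφ.2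
    have h2 : piNorm π (fun j => φ j * E 0 j - (∑ i, φ i * E 0 i) * π j) ≤ piNorm π φ := by
      calc piNorm π (fun j => φ j * E 0 j - (∑ i, φ i * E 0 i) * π j)
          ≤ piNorm π (fun j => φ j * E 0 j) := perp_le hπ hπd _
        _ ≤ piNorm π φ := piNorm_mul_le hπ φ (E 0) (fun j => abs_le.mpr
            ⟨by linarith [hE0 0 j], hE1 0 j⟩)
    have := mul_le_mul_of_nonneg_left h2 hγ0
    linarith
  | succ k ih =>
    have hstep := step_bound hM hπd hπ hπM (chainVec M φ E k) (E (k + 1))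
      (hE0 (k + 1)) (hE1 (k + 1)) hν0 (hvar (k + 1)) (hm (k + 1))
    set a := |∑ i, chainVec M φ E k i| with hadef
    set b := piNorm π (fun j => chainVec M φ E k j - (∑ i, chainVec M φ E k i) * π j) with hbdef
    have ha0 : 0 ≤ a := abs_nonneg _
    have hb0 : 0 ≤ b := piNorm_nonneg _
    have hch : ∀ j, chainVec M φ E (k + 1) j = (chainVec M φ E k ᵥ* M) j * E (k + 1) j :=
      fun j => rfl
    have h1 : |∑ j, chainVec M φ E (k + 1) j| ≤ mbar * a + specExp π M * ν * b := by
      simp_rw [hch]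
      exact hstep.1
    have h2 : piNorm π (fun j => chainVec M φ E (k + 1) j
          - (∑ i, chainVec M φ E (k + 1) i) * π j) ≤ ν * a + specExp π M * b := by
      simp_rw [hch]
      exact hstep.2
    calc |∑ j, chainVec M φ E (k + 1) j|
          + γ * piNorm π (fun j => chainVec M φ E (k + 1) j
              - (∑ i, chainVec M φ E (k + 1) i) * π j)
        ≤ (mbar * a + specExp π M * ν * b) + γ * (ν * a + specExp π M * b) := by
          apply add_le_add h1
          exact mul_le_mul_of_nonneg_left h2 hγ0
      _ = (mbar + γ * ν) * a + (specExp π M * (ν + γ)) * b := by ring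
      _ ≤ B * a + (B * γ) * b := by
          apply add_le_add
          · exact mul_le_mul_of_nonneg_right hA ha0
          · exact mul_le_mul_of_nonneg_right hBc hb0
      _ = B * (a + γ * b) := by ring
      _ ≤ B * (B ^ k * (1 + γ * piNorm π φ)) := mul_le_mul_of_nonneg_left ih hB0
      _ = B ^ (k + 1) * (1 + γ * piNorm π φ) := by ring

end StepRec


set_option maxHeartbeats 2000000 in
theorem stmt_17 :
    ∃ c : ℝ, 0 < c ∧
      ∀ (n t : ℕ) (M : Matrix (Fin n) (Fin n) ℝ) (π : Fin n → ℝ),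
        IsStochastic M → IsDist π → (∀ i, 0 < π i) → π ᵥ* M = π →
        specExp π M < 1 →
        ∀ φ : Fin n → ℝ, IsDist φ →
        ∀ f : Fin (t + 1) → Fin n → ℝ, (∀ i j, 0 ≤ f i j ∧ f i j ≤ 1) →
        ∀ μ : ℝ, 0 < μ → (∀ i, ∑ j, f i j * π j = μ) →
        ∀ δ : ℝ, 0 ≤ δ → δ ≤ 1 →
          ∑ v ∈ Finset.univ.filter (fun v : Fin (t + 1) → Fin n =>
              ∑ i, f i (v i) ≤ (1 - δ) * (μ * (t + 1))), walkProb φ M v ≤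
            c * piNorm π φ *
              Real.exp (-(δ ^ 2 * (1 - specExp π M) * μ * (t + 1) / 36)) := by
  refine ⟨3, by norm_num, ?_⟩
  intro n t M π hM hπd hπ hπM hspec φ hφ f hf μ hμ0 hfμ δ hδ0 hδ1
  obtain ⟨lam, hlam⟩ : ∃ l : ℝ, l = specExp π M := ⟨_, rfl⟩
  rw [← hlam] at hspec ⊢
  have hlam0 : 0 ≤ lam := hlam ▸ spec_nonneg hM hπ hπM
  have hspec_apply : ∀ w : Fin n → ℝ, (∑ j, w j = 0) →
      piNorm π (w ᵥ* M) ≤ lam * piNorm π w := by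
    intro w hw
    rw [hlam]
    exact spec_apply hM hπ hπM hw
  obtain ⟨eps, heps⟩ : ∃ e : ℝ, e = 1 - lam := ⟨_, rfl⟩
  have heps0 : 0 < eps := by rw [heps]; linarith
  have heps1 : eps ≤ 1 := by rw [heps]; linarith
  have hμ1 : μ ≤ 1 := by
    have h1 := hfμ 0
    have h2 : ∑ j, f 0 j * π j ≤ ∑ j, π j := by
      apply Finset.sum_le_sum
      intro j _
      calc f 0 j * π j ≤ 1 * π j := mul_le_mul_of_nonneg_right (hf 0 j).2 (hπ j).le
        _ = π j := one_mul _
    rw [h1, hπd.2] at h2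
    exact h2
  obtain ⟨r, hr⟩ : ∃ r : ℝ, r = δ * eps / 6 := ⟨_, rfl⟩
  have hr0 : 0 ≤ r := by rw [hr]; positivity
  have hr16 : r ≤ 1 / 6 := by rw [hr]; nlinarith
  have hrδ6 : r ≤ δ / 6 := by rw [hr]; nlinarith
  obtain ⟨x, hx⟩ : ∃ x : ℝ, x = r * μ := ⟨_, rfl⟩
  have hx0 : 0 ≤ x := by rw [hx]; positivity
  have hx16 : x ≤ 1 / 6 := by
    rw [hx]
    calc r * μ ≤ r * 1 := by nlinarith
      _ ≤ 1 / 6 := by linarith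
  obtain ⟨sμ, hsμ⟩ : ∃ s : ℝ, s = Real.sqrt μ := ⟨_, rfl⟩
  have hsμ0 : 0 < sμ := hsμ ▸ Real.sqrt_pos.mpr hμ0
  have hsμ1 : sμ ≤ 1 := hsμ ▸ Real.sqrt_le_one.mpr hμ1
  have hsμsq : sμ * sμ = μ := hsμ ▸ Real.mul_self_sqrt hμ0.le
  obtain ⟨ν, hν⟩ : ∃ v : ℝ, v = r * sμ := ⟨_, rfl⟩
  have hν0 : 0 ≤ ν := by rw [hν]; positivity
  obtain ⟨γ, hγ⟩ : ∃ g : ℝ, g = δ * sμ / 4 := ⟨_, rfl⟩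
  have hγ0 : 0 ≤ γ := by rw [hγ]; positivity
  have hγ14 : γ ≤ 1 / 4 := by rw [hγ]; nlinarith
  obtain ⟨mbar, hmbar⟩ : ∃ m : ℝ, m = Real.exp (-(x * (1 - δ / 6))) := ⟨_, rfl⟩
  obtain ⟨B, hB⟩ : ∃ b : ℝ, b = Real.exp (-(x * (1 - 2 * δ / 3))) := ⟨_, rfl⟩
  have hB0 : 0 ≤ B := hB ▸ (Real.exp_pos _).le
  obtain ⟨E, hE⟩ : ∃ E : ℕ → Fin n → ℝ, E = fun k j =>
      Real.exp (-(r * f ⟨min k t, Nat.lt_succ_of_le (min_le_right k t)⟩ j)) := ⟨_, rfl⟩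
  have hEkj : ∀ k j, E k j
      = Real.exp (-(r * f ⟨min k t, Nat.lt_succ_of_le (min_le_right k t)⟩ j)) := by
    intro k j; rw [hE]
  have hE0 : ∀ k j, 0 ≤ E k j := fun k j => (hEkj k j) ▸ (Real.exp_pos _).le
  have hE1 : ∀ k j, E k j ≤ 1 := by
    intro k j
    rw [hEkj k j]
    apply Real.exp_le_one_iff.mpr
    have := (hf ⟨min k t, Nat.lt_succ_of_le (min_le_right k t)⟩ j).1
    nlinarith
  -- variance bound
  have hvar : ∀ k, ∑ j, π j * (1 - E k j) ^ 2 ≤ ν ^ 2 := by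
    intro k
    have hik : (⟨min k t, Nat.lt_succ_of_le (min_le_right k t)⟩ : Fin (t + 1))
        = ⟨min k t, Nat.lt_succ_of_le (min_le_right k t)⟩ := rfl
    set i : Fin (t + 1) := ⟨min k t, Nat.lt_succ_of_le (min_le_right k t)⟩ with hidef
    have hterm : ∀ j, π j * (1 - E k j) ^ 2 ≤ r ^ 2 * (f i j * π j) := by
      intro j
      have hfj := hf i j
      have h1 : 1 - E k j ≤ r * f i j := by
        rw [hEkj k j]
        have := Real.add_one_le_exp (-(r * f i j))
        linarith
      have h2 : 0 ≤ 1 - E k j := by linarith [hE1 k j]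
      have hy0 : 0 ≤ r * f i j := mul_nonneg hr0 hfj.1
      have h3 : (1 - E k j) ^ 2 ≤ (r * f i j) ^ 2 := by nlinarith
      have hff : f i j ^ 2 ≤ f i j := by nlinarith [hfj.1, hfj.2]
      have h4 : (r * f i j) ^ 2 ≤ r ^ 2 * f i j := by
        calc (r * f i j) ^ 2 = r ^ 2 * f i j ^ 2 := by ring
          _ ≤ r ^ 2 * f i j := mul_le_mul_of_nonneg_left hff (sq_nonneg r)
      calc π j * (1 - E k j) ^ 2 ≤ π j * (r ^ 2 * f i j) :=
            mul_le_mul_of_nonneg_left (h3.trans h4) (hπ j).le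
        _ = r ^ 2 * (f i j * π j) := by ring
    calc ∑ j, π j * (1 - E k j) ^ 2 ≤ ∑ j, r ^ 2 * (f i j * π j) :=
          Finset.sum_le_sum fun j _ => hterm j
      _ = r ^ 2 * μ := by rw [← Finset.mul_sum, hfμ i]
      _ = ν ^ 2 := by rw [hν]; nlinarith [hsμsq]
  -- mean bound
  have hm : ∀ k, ∑ j, π j * E k j ≤ mbar := by
    intro k
    set i : Fin (t + 1) := ⟨min k t, Nat.lt_succ_of_le (min_le_right k t)⟩ with hidef
    have hconv : ∀ j, E k j ≤ 1 - f i j * (1 - Real.exp (-r)) := by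
      intro j
      have hfj := hf i j
      have hcv := convexOn_exp.2 (Set.mem_univ (0 : ℝ)) (Set.mem_univ (-r))
        (by linarith [hfj.1, hfj.2] : (0:ℝ) ≤ 1 - f i j) hfj.1 (by ring)
      simp only [smul_eq_mul] at hcv
      rw [hEkj k j]
      have harg : (1 - f i j) * 0 + f i j * (-r) = -(r * f i j) := by ring
      rw [harg, Real.exp_zero] at hcv
      calc Real.exp (-(r * f i j)) ≤ (1 - f i j) * 1 + f i j * Real.exp (-r) := hcv
        _ = 1 - f i j * (1 - Real.exp (-r)) := by ring
    have h1 : ∑ j, π j * E k j ≤ 1 - (1 - Real.exp (-r)) * μ := by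
      calc ∑ j, π j * E k j
          ≤ ∑ j, (π j - (1 - Real.exp (-r)) * (f i j * π j)) := by
            apply Finset.sum_le_sum
            intro j _
            have := mul_le_mul_of_nonneg_left (hconv j) (hπ j).le
            nlinarith [this]
        _ = 1 - (1 - Real.exp (-r)) * μ := by
            rw [Finset.sum_sub_distrib, hπd.2, ← Finset.mul_sum, hfμ i]
    have h2 : 1 - (1 - Real.exp (-r)) * μ ≤ Real.exp (-((1 - Real.exp (-r)) * μ)) := by
      linarith [Real.add_one_le_exp (-((1 - Real.exp (-r)) * μ))]
    have h3 : x * (1 - δ / 6) ≤ (1 - Real.exp (-r)) * μ := by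
      have hexpr : Real.exp (-r) ≤ 1 - r + r ^ 2 := by
        have ha : (1 : ℝ) + r ≤ Real.exp r := by linarith [Real.add_one_le_exp r]
        have hb : Real.exp (-r) = 1 / Real.exp r := by rw [Real.exp_neg]; ring
        have hc : 1 / Real.exp r ≤ 1 / (1 + r) :=
          div_le_div_of_nonneg_left one_pos.le (by linarith) ha
        have hd : 1 / (1 + r) ≤ 1 - r + r ^ 2 := by
          rw [div_le_iff₀ (by linarith : (0:ℝ) < 1 + r)]
          nlinarith
        linarith
      have h4 : r * (1 - δ / 6) ≤ r * (1 - r) := by nlinarith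
      have h5 : r * (1 - r) ≤ 1 - Real.exp (-r) := by nlinarith
      calc x * (1 - δ / 6) = (r * (1 - δ / 6)) * μ := by rw [hx]; ring
        _ ≤ (1 - Real.exp (-r)) * μ := by nlinarith
    have h6 : Real.exp (-((1 - Real.exp (-r)) * μ)) ≤ mbar := by
      rw [hmbar]
      apply Real.exp_le_exp.mpr
      linarith
    linarith
  -- condition (A)
  have hA : mbar + γ * ν ≤ B := by
    have hγν : γ * ν = x * δ / 4 := by
      rw [hγ, hν, hx]
      calc δ * sμ / 4 * (r * sμ) = sμ * sμ * (δ * r) / 4 := by ring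
        _ = r * μ * δ / 4 := by rw [hsμsq]; ring
    have h1 : B = mbar * Real.exp (x * δ / 2) := by
      rw [hB, hmbar, ← Real.exp_add]
      ring_nf
    have h2 : x * δ / 2 ≤ Real.exp (x * δ / 2) - 1 := by
      linarith [Real.add_one_le_exp (x * δ / 2)]
    have h3 : 1 - x ≤ mbar := by
      rw [hmbar]
      have hax : -x ≤ -(x * (1 - δ / 6)) := by nlinarith
      calc 1 - x = -x + 1 := by ring
        _ ≤ -(x * (1 - δ / 6)) + 1 := by linarith
        _ ≤ Real.exp (-(x * (1 - δ / 6))) := Real.add_one_le_exp _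
    have hmbar0 : 0 < mbar := hmbar ▸ Real.exp_pos _
    have h4 : (1 - x) * (x * δ / 2) ≤ mbar * (Real.exp (x * δ / 2) - 1) :=
      mul_le_mul h3 h2 (by positivity) hmbar0.le
    have h5 : x * δ / 4 ≤ (1 - x) * (x * δ / 2) := by nlinarith [mul_nonneg hx0 hδ0]
    rw [hγν, h1]
    nlinarith
  -- condition (B)
  have hBc : lam * (ν + γ) ≤ B * γ := by
    rcases eq_or_lt_of_le hδ0 with hδeq | hδpos
    · have hr_eq : r = 0 := by rw [hr, ← hδeq]; ring
      have hν_eq : ν = 0 := by rw [hν, hr_eq]; ring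
      have hγ_eq : γ = 0 := by rw [hγ, ← hδeq]; ring
      rw [hν_eq, hγ_eq]
      simp
    · have key : lam * (1 + 2 * eps / 3) ≤ B := by
        have h1 : lam * (1 + 2 * eps / 3) ≤ 1 - eps / 3 := by
          rw [heps]; nlinarith
        have h2 : (1 : ℝ) - eps / 3 ≤ Real.exp (-(eps / 3)) := by
          linarith [Real.add_one_le_exp (-(eps / 3))]
        have h3 : Real.exp (-(eps / 3)) ≤ B := by
          rw [hB]
          apply Real.exp_le_exp.mpr
          have hxe : x ≤ eps / 6 := by rw [hx, hr]; nlinarith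
          nlinarith
        linarith
      have hfact : ν + γ = (1 + 2 * eps / 3) * γ := by
        rw [hν, hγ, hr]
        field_simp
        ring
      rw [hfact, ← mul_assoc]
      exact mul_le_mul_of_nonneg_right key hγ0
  -- chain bound
  have hcb := chain_bound hM hπd hπ hπM φ hφ E hE0 hE1 hν0 hγ0 hB0 hvar hm hA (hlam ▸ hBc)
  have hN1 : (1 : ℝ) ≤ piNorm π φ := by
    have h := cs hπ φ (fun _ => 1)
    simp only [mul_one, one_pow] at h
    rw [hφ.2, hπd.2, Real.sqrt_one, mul_one, abs_one] at h
    exact h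
  have hwp0 : ∀ v : Fin (t + 1) → Fin n, 0 ≤ walkProb φ M v := by
    intro v
    unfold walkProb
    exact mul_nonneg (hφ.1 _) (Finset.prod_nonneg fun i _ => hM.1 _ _)
  have hmarkov : ∑ v ∈ Finset.univ.filter (fun v : Fin (t + 1) → Fin n =>
        ∑ i, f i (v i) ≤ (1 - δ) * (μ * (↑t + 1))), walkProb φ M v
      ≤ Real.exp (r * ((1 - δ) * (μ * (↑t + 1))))
        * ∑ v : Fin (t + 1) → Fin n,
            walkProb φ M v * ∏ i, Real.exp (-(r * f i (v i))) := by
    rw [Finset.mul_sum]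
    calc ∑ v ∈ Finset.univ.filter (fun v : Fin (t + 1) → Fin n =>
            ∑ i, f i (v i) ≤ (1 - δ) * (μ * (↑t + 1))), walkProb φ M v
        ≤ ∑ v ∈ Finset.univ.filter (fun v : Fin (t + 1) → Fin n =>
            ∑ i, f i (v i) ≤ (1 - δ) * (μ * (↑t + 1))),
            Real.exp (r * ((1 - δ) * (μ * (↑t + 1))))
              * (walkProb φ M v * ∏ i, Real.exp (-(r * f i (v i)))) := by
          apply Finset.sum_le_sum
          intro v hv
          rw [Finset.mem_filter] at hv
          have hle := hv.2
          have h1 : (1 : ℝ) ≤ Real.exp (r * ((1 - δ) * (μ * (↑t + 1))))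
              * ∏ i, Real.exp (-(r * f i (v i))) := by
            rw [← Real.exp_sum, ← Real.exp_add, ← Real.exp_zero]
            apply Real.exp_le_exp.mpr
            have hsum : ∑ i, -(r * f i (v i)) = -(r * ∑ i, f i (v i)) := by
              rw [Finset.sum_neg_distrib, ← Finset.mul_sum]
            rw [Real.exp_zero, hsum]
            have : 0 ≤ r * ((1 - δ) * (μ * (↑t + 1)) - ∑ i, f i (v i)) :=
              mul_nonneg hr0 (by linarith)
            nlinarith [this]
          calc walkProb φ M v = walkProb φ M v * 1 := (mul_one _).symm
            _ ≤ walkProb φ M v * (Real.exp (r * ((1 - δ) * (μ * (↑t + 1))))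
                  * ∏ i, Real.exp (-(r * f i (v i)))) :=
                mul_le_mul_of_nonneg_left h1 (hwp0 v)
            _ = Real.exp (r * ((1 - δ) * (μ * (↑t + 1))))
                  * (walkProb φ M v * ∏ i, Real.exp (-(r * f i (v i)))) := by ring
      _ ≤ ∑ v : Fin (t + 1) → Fin n,
            Real.exp (r * ((1 - δ) * (μ * (↑t + 1))))
              * (walkProb φ M v * ∏ i, Real.exp (-(r * f i (v i)))) := by
          apply Finset.sum_le_sum_of_subset_of_nonneg (Finset.filter_subset _ _)
          intro v _ _
          apply mul_nonneg (Real.exp_pos _).le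
          exact mul_nonneg (hwp0 v) (Finset.prod_nonneg fun i _ => (Real.exp_pos _).le)
  have hEi : ∀ (i : Fin (t + 1)) (vi : Fin n), E (i : ℕ) vi = Real.exp (-(r * f i vi)) := by
    intro i vi
    rw [hEkj]
    have hmin : (⟨min (i : ℕ) t, Nat.lt_succ_of_le (min_le_right _ t)⟩ : Fin (t + 1)) = i := by
      apply Fin.ext
      simp [Nat.min_eq_left (Fin.is_le i)]
    rw [hmin]
  have hidsum : ∑ v : Fin (t + 1) → Fin n,
        walkProb φ M v * ∏ i, Real.exp (-(r * f i (v i)))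
      = ∑ j, chainVec M φ E t j := by
    calc ∑ v : Fin (t + 1) → Fin n, walkProb φ M v * ∏ i, Real.exp (-(r * f i (v i)))
        = ∑ v : Fin (t + 1) → Fin n,
            (φ (v 0) * ∏ i : Fin t, M (v i.castSucc) (v i.succ))
              * ((∏ i : Fin (t + 1), E (i : ℕ) (v i)) * 1) := by
          apply Finset.sum_congr rfl
          intro v _
          have hp : ∏ i : Fin (t + 1), Real.exp (-(r * f i (v i)))
              = ∏ i : Fin (t + 1), E (i : ℕ) (v i) :=
            Finset.prod_congr rfl fun i _ => (hEi i (v i)).symm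
          rw [mul_one, hp]
          rfl
      _ = ∑ j, chainVec M φ E t j * 1 := chain_identity M φ E t (fun _ => 1)
      _ = ∑ j, chainVec M φ E t j := by simp
  have hchain : ∑ j, chainVec M φ E t j ≤ B ^ t * (1 + γ * piNorm π φ) := by
    have h := hcb t
    have h1 : ∑ j, chainVec M φ E t j ≤ |∑ j, chainVec M φ E t j| := le_abs_self _
    have h2 : 0 ≤ γ * piNorm π (fun j => chainVec M φ E t j
        - (∑ i, chainVec M φ E t i) * π j) := mul_nonneg hγ0 (piNorm_nonneg _)
    linarith
  have h2N : 1 + γ * piNorm π φ ≤ 2 * piNorm π φ := by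
    have h3 := mul_le_mul_of_nonneg_right hγ14 ((piNorm_nonneg (π := π) φ))
    nlinarith [hN1]
  have he16 : Real.exp (1 / 6 : ℝ) ≤ 6 / 5 := by
    have h := Real.add_one_le_exp (-(1 / 6) : ℝ)
    have hpos := Real.exp_pos (-(1 / 6) : ℝ)
    have hinv : Real.exp (1 / 6 : ℝ) * Real.exp (-(1 / 6) : ℝ) = 1 := by
      rw [← Real.exp_add]; norm_num
    nlinarith
  have hmono : Real.exp (r * ((1 - δ) * (μ * (↑t + 1)))) * B ^ t
      ≤ (6 / 5 : ℝ) * Real.exp (-(δ ^ 2 * eps * μ * (↑t + 1) / 36)) := by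
    have hBt : B ^ t = Real.exp ((t : ℝ) * (-(x * (1 - 2 * δ / 3)))) := by
      rw [hB, ← Real.exp_nat_mul]
    rw [hBt, ← Real.exp_add]
    have heq2 : r * ((1 - δ) * (μ * ((t : ℝ) + 1))) + (t : ℝ) * (-(x * (1 - 2 * δ / 3)))
        = -(x * δ / 3) * ((t : ℝ) + 1) + x * (1 - 2 * δ / 3) := by rw [hx]; ring
    rw [heq2]
    have hxδ : x * δ / 3 = δ ^ 2 * eps * μ / 18 := by rw [hx, hr]; ring
    have hbound : -(x * δ / 3) * ((t : ℝ) + 1) + x * (1 - 2 * δ / 3)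
        ≤ 1 / 6 + -(δ ^ 2 * eps * μ * ((t : ℝ) + 1) / 18) := by
      have h1 : x * (1 - 2 * δ / 3) ≤ 1 / 6 := by nlinarith
      have h2 : -(x * δ / 3) * ((t : ℝ) + 1) = -(δ ^ 2 * eps * μ * ((t : ℝ) + 1) / 18) := by
        rw [hxδ]; ring
      linarith
    calc Real.exp (-(x * δ / 3) * ((t : ℝ) + 1) + x * (1 - 2 * δ / 3))
        ≤ Real.exp (1 / 6 + -(δ ^ 2 * eps * μ * ((t : ℝ) + 1) / 18)) :=
          Real.exp_le_exp.mpr hbound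
      _ = Real.exp (1 / 6) * Real.exp (-(δ ^ 2 * eps * μ * ((t : ℝ) + 1) / 18)) :=
          Real.exp_add _ _
      _ ≤ (6 / 5 : ℝ) * Real.exp (-(δ ^ 2 * eps * μ * (↑t + 1) / 36)) := by
          apply mul_le_mul he16 _ (Real.exp_pos _).le (by norm_num)
          apply Real.exp_le_exp.mpr
          have h0 : 0 ≤ δ ^ 2 * eps * μ * ((t : ℝ) + 1) := by positivity
          linarith
  have hepsgoal : (1 : ℝ) - lam = eps := heps.symm
  rw [hepsgoal]
  calc ∑ v ∈ Finset.univ.filter (fun v : Fin (t + 1) → Fin n =>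
          ∑ i, f i (v i) ≤ (1 - δ) * (μ * (↑t + 1))), walkProb φ M v
      ≤ Real.exp (r * ((1 - δ) * (μ * (↑t + 1))))
          * ∑ v : Fin (t + 1) → Fin n,
              walkProb φ M v * ∏ i, Real.exp (-(r * f i (v i))) := hmarkov
    _ = Real.exp (r * ((1 - δ) * (μ * (↑t + 1)))) * ∑ j, chainVec M φ E t j := by
        rw [hidsum]
    _ ≤ Real.exp (r * ((1 - δ) * (μ * (↑t + 1)))) * (B ^ t * (1 + γ * piNorm π φ)) :=
        mul_le_mul_of_nonneg_left hchain (Real.exp_pos _).le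
    _ = (Real.exp (r * ((1 - δ) * (μ * (↑t + 1)))) * B ^ t) * (1 + γ * piNorm π φ) := by
        ring
    _ ≤ ((6 / 5 : ℝ) * Real.exp (-(δ ^ 2 * eps * μ * (↑t + 1) / 36)))
          * (2 * piNorm π φ) := by
        apply mul_le_mul hmono h2N (by linarith [mul_nonneg hγ0 (piNorm_nonneg (π := π) φ)])
        positivity
    _ ≤ 3 * piNorm π φ * Real.exp (-(δ ^ 2 * eps * μ * (↑t + 1) / 36)) := by
        nlinarith [mul_nonneg (piNorm_nonneg (π := π) φ) (Real.exp_pos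
          (-(δ ^ 2 * eps * μ * ((t : ℝ) + 1) / 36))).le]
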